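/- For ν = −1/2 + iM with M → ∞ and σ = l + 1/2 fixed (l ∈ ℕ₀), the quantity √(γ_l/(2α)) · N(ν) · T_ν^{l+1/2}(0) is asymptotic to (−1)^l · (2αM)^{−1/2}, i.e., the ratio tends to 1 as M → ∞. -/

import Mathlib

open Complex Filter Finset

lemma tendsto_sinh_div_cosh :
    Filter.Tendsto (fun x : ℝ => Real.sinh x / Real.cosh x) Filter.atTop (nhds 1) := by
  have key : ∀ x : ℝ, Real.sinh x / Real.cosh x
      = (1 - Real.exp (-(2*x)))/(1 + Real.exp (-(2*x))) := by
    intro x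
    rw [Real.sinh_eq, Real.cosh_eq, Real.exp_neg, Real.exp_neg,
      show (2:ℝ)*x = x + x by ring, Real.exp_add]
    have h := (Real.exp_pos x).ne'
    have h2 : (Real.exp x)*(Real.exp x) ≠ 0 := by positivity
    have h3 : 1 + ((Real.exp x)*(Real.exp x))⁻¹ ≠ 0 := by positivity
    have h4 : Real.exp x + (Real.exp x)⁻¹ ≠ 0 := by positivity
    field_simp
  have hexp : Filter.Tendsto (fun x : ℝ => Real.exp (-(2*x))) Filter.atTop (nhds 0) := by
    have h1 : Filter.Tendsto (fun x : ℝ => (2:ℝ)*x) Filter.atTop Filter.atTop :=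
      Filter.Tendsto.const_mul_atTop (by norm_num) Filter.tendsto_id
    exact Real.tendsto_exp_neg_atTop_nhds_zero.comp h1
  have hnum : Filter.Tendsto (fun x : ℝ => 1 - Real.exp (-(2*x))) Filter.atTop (nhds (1-0)) :=
    tendsto_const_nhds.sub hexp
  have hden : Filter.Tendsto (fun x : ℝ => 1 + Real.exp (-(2*x))) Filter.atTop (nhds (1+0)) :=
    tendsto_const_nhds.add hexp
  rw [sub_zero] at hnum
  rw [add_zero] at hden
  have hdiv := hnum.div hden one_ne_zero
  rw [div_one] at hdiv
  exact Filter.Tendsto.congr (fun x => (key x).symm) hdiv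

lemma tendsto_cosh_div_sinh :
    Filter.Tendsto (fun x : ℝ => Real.cosh x / Real.sinh x) Filter.atTop (nhds 1) := by
  have := tendsto_sinh_div_cosh.inv₀ (by norm_num)
  simp only [inv_one] at this
  exact Filter.Tendsto.congr (fun x => by rw [inv_div]) this

lemma tendsto_quad_ratio (a b : ℝ) :
    Filter.Tendsto (fun M : ℝ => (M^2+a)/(M^2+b)) Filter.atTop (nhds 1) := by
  have hsq : Filter.Tendsto (fun M : ℝ => M^2 + b) Filter.atTop Filter.atTop := by
    apply Filter.tendsto_atTop_add_const_right
    exact (tendsto_pow_atTop two_ne_zero).comp Filter.tendsto_id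
  have h0 : Filter.Tendsto (fun M : ℝ => (a-b)/(M^2+b)) Filter.atTop (nhds 0) :=
    Filter.Tendsto.div_atTop tendsto_const_nhds hsq
  have h1 : Filter.Tendsto (fun M : ℝ => 1 + (a-b)/(M^2+b)) Filter.atTop (nhds (1+0)) :=
    tendsto_const_nhds.add h0
  rw [add_zero] at h1
  apply Filter.Tendsto.congr' _ h1
  filter_upwards [Filter.eventually_ge_atTop (|b|+1)] with M hM
  have hb : M^2 + b > 0 := by nlinarith [abs_nonneg b, neg_abs_le b, le_abs_self b]
  field_simp
  ring

noncomputable def PP (l : ℕ) (M : ℝ) : ℝ := ∏ j ∈ Finset.range l, (M^2 + ((j:ℝ)+1)^2)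
noncomputable def QQ (l : ℕ) (M : ℝ) : ℂ :=
  ∏ k ∈ Finset.range l, (Complex.I*(M:ℂ) - ((l:ℂ) - 1 - 2*(k:ℂ)))
noncomputable def ff (l : ℕ) (M : ℝ) : ℂ :=
  (-1)^l * (-Complex.I) * Complex.sin ((Real.pi:ℂ)*(Complex.I*(M:ℂ) - (l:ℂ))/2) * QQ l M
noncomputable def RR (l : ℕ) (M : ℝ) : ℂ :=
  ((Real.sqrt (2/(Real.sinh (Real.pi*M) * PP l M)) : ℝ) : ℂ) * ff l M

lemma PP_pos (l : ℕ) (M : ℝ) : 0 < PP l M :=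
  Finset.prod_pos fun j _ => by positivity

-- step identities
lemma QQ_step (l : ℕ) (M : ℝ) :
    QQ (l+2) M = QQ l M * (-(((M:ℂ))^2 + ((l:ℂ)+1)^2)) := by
  rw [QQ, Finset.prod_range_succ, Finset.prod_range_succ']
  have hmid : (∏ k ∈ Finset.range l,
      (Complex.I*(M:ℂ) - ((((l+2:ℕ)):ℂ) - 1 - 2*(((k+1:ℕ)):ℂ)))) = QQ l M := by
    rw [QQ]
    exact Finset.prod_congr rfl fun k _ => by push_cast; ring
  rw [hmid]
  push_cast
  linear_combination (QQ l M * ((M:ℂ))^2) * Complex.I_sq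

lemma PP_step (l : ℕ) (M : ℝ) :
    PP (l+2) M = PP l M * ((M^2+((l:ℝ)+1)^2) * (M^2+((l:ℝ)+2)^2)) := by
  rw [PP, Finset.prod_range_succ, Finset.prod_range_succ, ← PP]
  push_cast
  ring

lemma sin_step (l : ℕ) (M : ℝ) :
    Complex.sin ((Real.pi:ℂ)*(Complex.I*(M:ℂ) - ((l+2:ℕ):ℂ))/2)
      = -Complex.sin ((Real.pi:ℂ)*(Complex.I*(M:ℂ) - (l:ℂ))/2) := by
  rw [show (Real.pi:ℂ)*(Complex.I*(M:ℂ) - ((l+2:ℕ):ℂ))/2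
      = (Real.pi:ℂ)*(Complex.I*(M:ℂ) - (l:ℂ))/2 - (Real.pi:ℂ) by push_cast; ring,
    Complex.sin_sub_pi]

lemma RR_step (l : ℕ) (M : ℝ) (hM : 0 < M) :
    RR (l+2) M = RR l M
      * ((Real.sqrt ((M^2+((l:ℝ)+1)^2)/(M^2+((l:ℝ)+2)^2)) : ℝ) : ℂ) := by
  have hS : 0 < Real.sinh (Real.pi*M) := Real.sinh_pos_iff.2 (by positivity)
  have hP := PP_pos l M
  have hA : (0:ℝ) < M^2+((l:ℝ)+1)^2 := by positivity
  have hB : (0:ℝ) < M^2+((l:ℝ)+2)^2 := by positivity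
  have hff : ff (l+2) M = ff l M * (((M^2+((l:ℝ)+1)^2 : ℝ)):ℂ) := by
    rw [ff, ff, QQ_step, sin_step]
    push_cast
    ring
  have hsq : Real.sqrt (2/(Real.sinh (Real.pi*M) * PP (l+2) M)) * (M^2+((l:ℝ)+1)^2)
      = Real.sqrt (2/(Real.sinh (Real.pi*M) * PP l M))
        * Real.sqrt ((M^2+((l:ℝ)+1)^2)/(M^2+((l:ℝ)+2)^2)) := by
    have h1 : Real.sqrt (2/(Real.sinh (Real.pi*M) * PP (l+2) M)) * (M^2+((l:ℝ)+1)^2)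
        = Real.sqrt ((2/(Real.sinh (Real.pi*M) * PP (l+2) M)) * (M^2+((l:ℝ)+1)^2)^2) := by
      rw [Real.sqrt_mul (div_nonneg (by norm_num) (mul_nonneg hS.le (PP_pos _ M).le)),
        Real.sqrt_sq hA.le]
    have h2 : Real.sqrt (2/(Real.sinh (Real.pi*M) * PP l M))
          * Real.sqrt ((M^2+((l:ℝ)+1)^2)/(M^2+((l:ℝ)+2)^2))
        = Real.sqrt ((2/(Real.sinh (Real.pi*M) * PP l M))
          * ((M^2+((l:ℝ)+1)^2)/(M^2+((l:ℝ)+2)^2))) :=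
      (Real.sqrt_mul (div_nonneg (by norm_num) (mul_nonneg hS.le hP.le)) _).symm
    rw [h1, h2]
    congr 1
    rw [PP_step]
    field_simp
  rw [RR, RR, hff]
  calc ((Real.sqrt (2/(Real.sinh (Real.pi*M) * PP (l+2) M)) : ℝ):ℂ)
        * (ff l M * (((M^2+((l:ℝ)+1)^2 : ℝ)):ℂ))
      = ((Real.sqrt (2/(Real.sinh (Real.pi*M) * PP (l+2) M)) * (M^2+((l:ℝ)+1)^2) : ℝ):ℂ)
          * ff l M := by push_cast; ring
    _ = _ := by rw [hsq]; push_cast; ring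

lemma tendsto_pi_half : Filter.Tendsto (fun M : ℝ => Real.pi*M/2) Filter.atTop Filter.atTop := by
  apply Filter.Tendsto.atTop_div_const (by norm_num)
  exact Filter.Tendsto.const_mul_atTop Real.pi_pos Filter.tendsto_id

lemma RR_zero_tendsto : Filter.Tendsto (RR 0) Filter.atTop (nhds 1) := by
  have hre : Filter.Tendsto
      (fun M : ℝ => Real.sqrt (Real.sinh (Real.pi*M/2) / Real.cosh (Real.pi*M/2)))
      Filter.atTop (nhds 1) := by
    have h1 := (tendsto_sinh_div_cosh.comp tendsto_pi_half)
    have h2 := ((Real.continuous_sqrt.tendsto 1).comp h1)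
    simpa [Function.comp_def] using h2
  have hC : Filter.Tendsto
      (fun M : ℝ => ((Real.sqrt (Real.sinh (Real.pi*M/2) / Real.cosh (Real.pi*M/2)) : ℝ):ℂ))
      Filter.atTop (nhds 1) := by
    have := (Complex.continuous_ofReal.tendsto 1).comp hre
    simpa [Function.comp_def] using this
  apply Filter.Tendsto.congr' _ hC
  filter_upwards [Filter.eventually_gt_atTop 0] with M hM
  have hx : 0 < Real.pi*M/2 := by positivity
  have hs : 0 < Real.sinh (Real.pi*M/2) := Real.sinh_pos_iff.2 hx
  have hc : 0 < Real.cosh (Real.pi*M/2) := Real.cosh_pos _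
  have hS : 0 < Real.sinh (Real.pi*M) := Real.sinh_pos_iff.2 (by positivity)
  have hRR : RR 0 M = ((Real.sqrt (2/(Real.sinh (Real.pi*M)))
        * Real.sinh (Real.pi*M/2) : ℝ):ℂ) := by
    rw [RR, ff, QQ, PP]
    simp only [Finset.range_zero, Finset.prod_empty, pow_zero, Nat.cast_zero, mul_one, one_mul]
    rw [show (Real.pi:ℂ)*(Complex.I*(M:ℂ) - 0)/2 = ((Real.pi*M/2 : ℝ):ℂ)*Complex.I by
      push_cast; ring, Complex.sin_mul_I, ← Complex.ofReal_sinh, Complex.ofReal_mul]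
    linear_combination (-(Real.sqrt (2/(Real.sinh (Real.pi*M))) : ℂ)
      * ((Real.sinh (Real.pi*M/2) : ℝ):ℂ)) * Complex.I_sq
  have hreal : Real.sqrt (2/(Real.sinh (Real.pi*M))) * Real.sinh (Real.pi*M/2)
      = Real.sqrt (Real.sinh (Real.pi*M/2) / Real.cosh (Real.pi*M/2)) := by
    rw [show Real.sqrt (2/(Real.sinh (Real.pi*M))) * Real.sinh (Real.pi*M/2)
        = Real.sqrt ((2/(Real.sinh (Real.pi*M))) * (Real.sinh (Real.pi*M/2))^2) by
      rw [Real.sqrt_mul (div_nonneg (by norm_num) hS.le), Real.sqrt_sq hs.le]]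
    congr 1
    rw [show Real.pi*M = 2*(Real.pi*M/2) by ring, Real.sinh_two_mul]
    field_simp
  rw [hRR, ← hreal]
lemma RR_one_tendsto : Filter.Tendsto (RR 1) Filter.atTop (nhds 1) := by
  have hquad : Filter.Tendsto (fun M : ℝ => (M^2+0)/(M^2+1)) Filter.atTop (nhds 1) :=
    tendsto_quad_ratio 0 1
  have hco := tendsto_cosh_div_sinh.comp tendsto_pi_half
  have hre : Filter.Tendsto
      (fun M : ℝ => Real.sqrt ((Real.cosh (Real.pi*M/2) / Real.sinh (Real.pi*M/2))
        * ((M^2+0)/(M^2+1)))) Filter.atTop (nhds 1) := by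
    have h1 := hco.mul hquad
    rw [mul_one] at h1
    have h2 := ((Real.continuous_sqrt.tendsto 1).comp h1)
    simpa [Function.comp_def] using h2
  have hC : Filter.Tendsto (fun M : ℝ =>
      ((Real.sqrt ((Real.cosh (Real.pi*M/2) / Real.sinh (Real.pi*M/2))
        * ((M^2+0)/(M^2+1))) : ℝ):ℂ)) Filter.atTop (nhds 1) := by
    have := (Complex.continuous_ofReal.tendsto 1).comp hre
    simpa [Function.comp_def] using this
  apply Filter.Tendsto.congr' _ hC
  filter_upwards [Filter.eventually_gt_atTop 0] with M hM
  have hx : 0 < Real.pi*M/2 := by positivity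
  have hs : 0 < Real.sinh (Real.pi*M/2) := Real.sinh_pos_iff.2 hx
  have hc : 0 < Real.cosh (Real.pi*M/2) := Real.cosh_pos _
  have hS : 0 < Real.sinh (Real.pi*M) := Real.sinh_pos_iff.2 (by positivity)
  have hRR : RR 1 M = ((Real.sqrt (2/(Real.sinh (Real.pi*M) * (M^2+1)))
        * (M * Real.cosh (Real.pi*M/2)) : ℝ):ℂ) := by
    rw [RR, ff, QQ, PP]
    simp only [Finset.range_one, Finset.prod_singleton, Nat.cast_one, Nat.cast_zero, pow_one]
    rw [show ((M:ℝ)^2 + ((0:ℝ)+1)^2 : ℝ) = M^2 + 1 by norm_num,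
      show ((1:ℂ) - 1 - 2*0 : ℂ) = 0 by norm_num, sub_zero]
    rw [show (Real.pi:ℂ)*(Complex.I*(M:ℂ) - 1)/2
        = ((Real.pi*M/2 : ℝ):ℂ)*Complex.I - (Real.pi:ℂ)/2 by push_cast; ring]
    rw [show ∀ w : ℂ, Complex.sin (w - (Real.pi:ℂ)/2) = -Complex.cos w from fun w => by
      rw [← neg_sub, Complex.sin_neg, Complex.sin_pi_div_two_sub]]
    rw [Complex.cos_mul_I, ← Complex.ofReal_cosh, Complex.ofReal_mul, Complex.ofReal_mul]
    linear_combination (-(M:ℂ) * ((Real.cosh (Real.pi*M/2) : ℝ):ℂ)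
      * ((Real.sqrt (2/(Real.sinh (Real.pi*M) * (M^2+1))) : ℝ):ℂ)) * Complex.I_sq
  have hreal : Real.sqrt (2/(Real.sinh (Real.pi*M) * (M^2+1))) * (M * Real.cosh (Real.pi*M/2))
      = Real.sqrt ((Real.cosh (Real.pi*M/2) / Real.sinh (Real.pi*M/2)) * ((M^2+0)/(M^2+1))) := by
    rw [show Real.sqrt (2/(Real.sinh (Real.pi*M) * (M^2+1))) * (M * Real.cosh (Real.pi*M/2))
        = Real.sqrt ((2/(Real.sinh (Real.pi*M) * (M^2+1))) * (M * Real.cosh (Real.pi*M/2))^2) by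
      rw [Real.sqrt_mul (div_nonneg (by norm_num) (by positivity)), Real.sqrt_sq (by positivity)]]
    congr 1
    rw [show Real.pi*M = 2*(Real.pi*M/2) by ring, Real.sinh_two_mul]
    field_simp
    ring
  rw [hRR, ← hreal]
lemma RR_tendsto (l : ℕ) : Filter.Tendsto (RR l) Filter.atTop (nhds 1) := by
  induction l using Nat.twoStepInduction with
  | zero => exact RR_zero_tendsto
  | one => exact RR_one_tendsto
  | more l ih _ =>
    have hq : Filter.Tendsto (fun M : ℝ =>
        ((Real.sqrt ((M^2+((l:ℝ)+1)^2)/(M^2+((l:ℝ)+2)^2)) : ℝ):ℂ)) Filter.atTop (nhds 1) := by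
      have h1 := tendsto_quad_ratio (((l:ℝ)+1)^2) (((l:ℝ)+2)^2)
      have h2 := ((Real.continuous_sqrt.tendsto 1).comp h1)
      rw [Real.sqrt_one] at h2
      have h3 := (Complex.continuous_ofReal.tendsto 1).comp h2
      simpa [Function.comp_def] using h3
    have h := ih.mul hq
    rw [mul_one] at h
    apply Filter.Tendsto.congr' _ h
    filter_upwards [Filter.eventually_gt_atTop 0] with M hM
    exact (RR_step l M hM).symm

lemma PP_cast (l : ℕ) (M : ℝ) :
    ((PP l M : ℝ) : ℂ) = ∏ k ∈ Finset.range l, (((l:ℂ) - k)^2 + (M:ℂ)^2) := by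
  rw [PP, Complex.ofReal_prod, ← Finset.prod_range_reflect]
  refine Finset.prod_congr rfl fun j hj => ?_
  rw [Finset.mem_range] at hj
  have h1 : l - 1 - j = l - (j+1) := by omega
  push_cast [h1, Nat.cast_sub (show j + 1 ≤ l from hj)]
  ring

lemma Gamma_ne_zero_of_im {s : ℂ} (hs : s.im ≠ 0) : Complex.Gamma s ≠ 0 :=
  Complex.Gamma_ne_zero fun m h => hs (by rw [h]; simp)

lemma Gamma_add_nat (s : ℂ) (hs : s.im ≠ 0) (n : ℕ) :
    Complex.Gamma (s + n) = Complex.Gamma s * ∏ k ∈ Finset.range n, (s + k) := by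
  induction n with
  | zero => simp
  | succ n ih =>
    have h1 : s + n ≠ 0 := fun h => hs (by simpa using congrArg Complex.im h)
    rw [show ((n+1 : ℕ) : ℂ) = (n : ℂ) + 1 by push_cast; ring, ← add_assoc,
      Complex.Gamma_add_one _ h1, ih, Finset.prod_range_succ]
    ring

lemma gamma_eq (l : ℕ) (M : ℝ) (hM : 0 < M) :
    Complex.Gamma (-(Complex.I*(M:ℂ)) - l) * Complex.Gamma (Complex.I*(M:ℂ) - l)
      = ((Real.pi / (M * Real.sinh (Real.pi*M) * PP l M) : ℝ) : ℂ) := by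
  have hM0 : M ≠ 0 := hM.ne'
  have him1 : (Complex.I*(M:ℂ) - l).im = M := by simp
  have him2 : (-(Complex.I*(M:ℂ)) - l).im = -M := by simp
  -- shift identities
  have e1 := Gamma_add_nat (Complex.I*(M:ℂ) - l) (by rw [him1]; exact hM0) l
  have e2 := Gamma_add_nat (-(Complex.I*(M:ℂ)) - l) (by rw [him2]; exact neg_ne_zero.2 hM0) l
  rw [show Complex.I*(M:ℂ) - l + l = Complex.I*M by ring] at e1
  rw [show -(Complex.I*(M:ℂ)) - l + l = -(Complex.I*M) by ring] at e2
  -- product of correction factors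
  have hprod : (∏ k ∈ Finset.range l, (-(Complex.I*(M:ℂ)) - l + k))
      * ∏ k ∈ Finset.range l, (Complex.I*(M:ℂ) - l + k) = ((PP l M : ℝ) : ℂ) := by
    rw [PP_cast, ← Finset.prod_mul_distrib]
    refine Finset.prod_congr rfl fun k _ => ?_
    linear_combination (-(M:ℂ)^2) * Complex.I_sq
  have hA : (∏ k ∈ Finset.range l, (Complex.I*(M:ℂ) - l + k)) ≠ 0 :=
    Finset.prod_ne_zero_iff.2 fun k _ => fun h => by
      have := congrArg Complex.im h; simp [hM0] at this
  have hB : (∏ k ∈ Finset.range l, (-(Complex.I*(M:ℂ)) - l + k)) ≠ 0 :=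
    Finset.prod_ne_zero_iff.2 fun k _ => fun h => by
      have := congrArg Complex.im h; simp [hM0] at this
  -- Gamma(iM)Gamma(-iM)
  have hz : (Complex.I*(M:ℂ)) ≠ 0 := by
    intro h; have := congrArg Complex.im h; simp [hM0] at this
  have hrefl := Complex.Gamma_mul_Gamma_one_sub (Complex.I*(M:ℂ))
  have hrec : Complex.Gamma (-(Complex.I*(M:ℂ)) + 1)
      = -(Complex.I*(M:ℂ)) * Complex.Gamma (-(Complex.I*(M:ℂ))) :=
    Complex.Gamma_add_one _ (neg_ne_zero.2 hz)
  rw [show (1 : ℂ) - Complex.I*(M:ℂ) = -(Complex.I*(M:ℂ)) + 1 by ring, hrec] at hrefl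
  have hsin : Complex.sin ((Real.pi:ℂ) * (Complex.I*(M:ℂ)))
      = ((Real.sinh (Real.pi*M) : ℝ):ℂ) * Complex.I := by
    rw [show (Real.pi:ℂ) * (Complex.I*(M:ℂ)) = ((Real.pi*M : ℝ):ℂ) * Complex.I by
      push_cast; ring, Complex.sin_mul_I, Complex.ofReal_sinh]
  have hsinh_ne : Real.sinh (Real.pi*M) ≠ 0 :=
    ne_of_gt (by positivity)
  -- combine
  have hG1 : Complex.Gamma (Complex.I*(M:ℂ)) ≠ 0 :=
    Gamma_ne_zero_of_im (by simp [hM0])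
  have hG2 : Complex.Gamma (-(Complex.I*(M:ℂ))) ≠ 0 :=
    Gamma_ne_zero_of_im (by simp [hM0])
  have key : Complex.Gamma (Complex.I*(M:ℂ)) * Complex.Gamma (-(Complex.I*(M:ℂ)))
      = ((Real.pi : ℝ):ℂ) / (((M * Real.sinh (Real.pi*M) : ℝ)):ℂ) := by
    rw [hsin] at hrefl
    have hden : (-(Complex.I*(M:ℂ))) * (((Real.sinh (Real.pi*M) : ℝ):ℂ) * Complex.I)
        = ((M * Real.sinh (Real.pi*M) : ℝ):ℂ) := by
      rw [Complex.ofReal_mul]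
      linear_combination (-(M:ℂ) * ((Real.sinh (Real.pi*M) : ℝ):ℂ)) * Complex.I_sq
    rw [eq_div_iff (Complex.ofReal_ne_zero.2 (by positivity))]
    calc Complex.Gamma (Complex.I*(M:ℂ)) * Complex.Gamma (-(Complex.I*(M:ℂ)))
        * ((M * Real.sinh (Real.pi*M) : ℝ):ℂ)
        = Complex.Gamma (Complex.I*(M:ℂ)) * ((-(Complex.I*(M:ℂ))) * Complex.Gamma (-(Complex.I*(M:ℂ))))
          * (((Real.sinh (Real.pi*M) : ℝ):ℂ) * Complex.I) := by rw [← hden]; ring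
      _ = ((Real.pi:ℝ):ℂ) := by
          rw [hrefl, div_mul_cancel₀]
          exact mul_ne_zero (Complex.ofReal_ne_zero.2 hsinh_ne) Complex.I_ne_zero
  -- final assembly
  have e1' : Complex.Gamma (Complex.I*(M:ℂ) - l)
      = Complex.Gamma (Complex.I*(M:ℂ)) / ∏ k ∈ Finset.range l, (Complex.I*(M:ℂ) - l + k) := by
    rw [eq_div_iff hA]; linear_combination -e1
  have e2' : Complex.Gamma (-(Complex.I*(M:ℂ)) - l)
      = Complex.Gamma (-(Complex.I*(M:ℂ))) / ∏ k ∈ Finset.range l, (-(Complex.I*(M:ℂ)) - l + k) := by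
    rw [eq_div_iff hB]; linear_combination -e2
  rw [e1', e2', div_mul_div_comm,
    mul_comm (Complex.Gamma (-(Complex.I*(M:ℂ)))) (Complex.Gamma (Complex.I*(M:ℂ))), key, hprod,
    div_div, ← Complex.ofReal_mul, ← Complex.ofReal_div]

lemma T0_eq (l : ℕ) (M : ℝ) (hM : M ≠ 0) :
    ((Real.sqrt Real.pi : ℝ) : ℂ) / 2 ^ ((l:ℂ) + 1/2)
      * Complex.Gamma (Complex.I*(M:ℂ) + l + 1)
      / (Complex.Gamma (Complex.I*(M:ℂ) - l)
        * Complex.Gamma (((l:ℂ) + 2 - Complex.I*(M:ℂ))/2)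
        * Complex.Gamma ((Complex.I*(M:ℂ) + l + 2)/2))
    = ((Real.sqrt 2 / Real.sqrt Real.pi : ℝ) : ℂ)
      * Complex.sin ((Real.pi:ℂ) * (Complex.I*(M:ℂ) - l)/2) * QQ l M := by
  set z : ℂ := Complex.I*(M:ℂ) with hzdef
  have h2 : (2:ℂ) ≠ 0 := two_ne_zero
  have hsπ : ((Real.sqrt Real.pi : ℝ):ℂ) ≠ 0 :=
    Complex.ofReal_ne_zero.2 (by positivity)
  have hπc : ((Real.pi : ℝ):ℂ) ≠ 0 := Complex.ofReal_ne_zero.2 Real.pi_ne_zero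
  have hpow : ∀ w : ℂ, (2:ℂ) ^ w ≠ 0 := fun w => by
    simp [Complex.cpow_eq_zero_iff]
  -- Gamma nonvanishing
  have hzim : z.im = M := by simp [hzdef]
  have hG1 : Complex.Gamma ((z - l)/2) ≠ 0 :=
    Gamma_ne_zero_of_im (by simp [hzdef, hM])
  have hG2 : Complex.Gamma ((z - l + 1)/2) ≠ 0 :=
    Gamma_ne_zero_of_im (by simp [hzdef, hM])
  have hGz1 : Complex.Gamma (z + l + 1) ≠ 0 :=
    Gamma_ne_zero_of_im (by simp [hzdef, hM])
  have hsin : Complex.sin ((Real.pi:ℂ) * (z - l)/2) ≠ 0 := by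
    intro h
    rw [Complex.sin_eq_zero_iff] at h
    obtain ⟨k, hk⟩ := h
    have := congrArg Complex.im hk
    simp [hzdef] at this
    exact hM this
  -- duplication at (z-l)/2
  have dup2 := Complex.Gamma_mul_Gamma_add_half ((z - (l:ℂ))/2)
  rw [show (z - (l:ℂ))/2 + 1/2 = (z - l + 1)/2 by ring,
      show 2*((z - (l:ℂ))/2) = z - l by ring] at dup2
  -- duplication at (z+l+1)/2
  have dup1 := Complex.Gamma_mul_Gamma_add_half ((z + (l:ℂ) + 1)/2)
  rw [show (z + (l:ℂ) + 1)/2 + 1/2 = (z + l + 2)/2 by ring,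
      show 2*((z + (l:ℂ) + 1)/2) = z + l + 1 by ring,
      show (1:ℂ) - (z + (l:ℂ) + 1) = -(z + l) by ring] at dup1
  -- shift
  have him : ((z - (l:ℂ) + 1)/2).im = M/2 := by simp [hzdef]
  have shift := Gamma_add_nat ((z - (l:ℂ) + 1)/2) (by rw [him]; simpa using hM) l
  rw [show (z - (l:ℂ) + 1)/2 + (l:ℂ) = (z + l + 1)/2 by ring] at shift
  set C : ℂ := ∏ k ∈ Finset.range l, ((z - (l:ℂ) + 1)/2 + k) with hCdef
  have hC : C ≠ 0 := Finset.prod_ne_zero_iff.2 fun k _ => fun h => by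
    have := congrArg Complex.im h; simp [hzdef, hM] at this
  -- reflection
  have refl := Complex.Gamma_mul_Gamma_one_sub ((z - (l:ℂ))/2)
  rw [show (1:ℂ) - (z - (l:ℂ))/2 = ((l:ℂ) + 2 - z)/2 by ring,
      show (Real.pi:ℂ) * ((z - (l:ℂ))/2) = (Real.pi:ℂ) * (z - l)/2 by ring] at refl
  -- solve for individual Gammas
  have hp2 : (2:ℂ)^((1:ℂ)-(z-(l:ℂ))) = 2^(2*l+1) * (2:ℂ)^(-(z+(l:ℂ))) := by
    rw [← Complex.cpow_natCast 2 (2*l+1), ← Complex.cpow_add _ _ h2]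
    congr 1; push_cast; ring
  have hGzl : Complex.Gamma (z - l)
      = Complex.Gamma ((z - l)/2) * Complex.Gamma ((z - l + 1)/2)
        / (2^(2*l+1) * (2:ℂ)^(-(z+(l:ℂ))) * ((Real.sqrt Real.pi : ℝ):ℂ)) := by
    rw [eq_div_iff (mul_ne_zero (mul_ne_zero (pow_ne_zero _ h2) (hpow _)) hsπ)]
    rw [← hp2]
    linear_combination -dup2
  have hGr : Complex.Gamma (((l:ℂ) + 2 - z)/2)
      = ((Real.pi : ℝ):ℂ) / (Complex.sin ((Real.pi:ℂ) * (z - l)/2) * Complex.Gamma ((z - l)/2)) := by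
    rw [eq_div_iff (mul_ne_zero hsin hG1)]
    rw [eq_div_iff hsin] at refl
    linear_combination refl
  have hGq : Complex.Gamma ((z + l + 2)/2)
      = Complex.Gamma (z + l + 1) * (2:ℂ)^(-(z+(l:ℂ))) * ((Real.sqrt Real.pi : ℝ):ℂ)
        / (Complex.Gamma ((z - l + 1)/2) * C) := by
    rw [shift] at dup1
    rw [eq_div_iff (mul_ne_zero hG2 hC)]
    linear_combination dup1
  have hQQ : QQ l M = 2^l * C := by
    rw [QQ, hCdef, show ((2:ℂ)^l = ∏ _k ∈ Finset.range l, (2:ℂ)) by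
      rw [Finset.prod_const, Finset.card_range], ← Finset.prod_mul_distrib]
    refine Finset.prod_congr rfl fun k _ => ?_
    simp only [hzdef]; ring
  have hp1 : (2:ℂ) ^ ((l:ℂ) + 1/2) = 2^l * ((Real.sqrt 2 : ℝ):ℂ) := by
    have h2c : ((Real.sqrt 2:ℝ):ℂ) = (2:ℂ) ^ ((1:ℂ)/2) := by
      rw [show ((1:ℂ)/2) = ((1/2 : ℝ):ℂ) by norm_num,
        show (2:ℂ) = ((2:ℝ):ℂ) by norm_num, ← Complex.ofReal_cpow (by norm_num)]
      rw [Real.sqrt_eq_rpow]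
    rw [h2c, ← Complex.cpow_natCast 2 l, ← Complex.cpow_add _ _ h2]
  have hsπ2 : ((Real.sqrt Real.pi:ℝ):ℂ) * ((Real.sqrt Real.pi:ℝ):ℂ) = ((Real.pi:ℝ):ℂ) := by
    rw [← Complex.ofReal_mul, Real.mul_self_sqrt Real.pi_pos.le]
  have hs22 : ((Real.sqrt 2:ℝ):ℂ) * ((Real.sqrt 2:ℝ):ℂ) = (2:ℂ) := by
    rw [← Complex.ofReal_mul, Real.mul_self_sqrt (by norm_num)]; norm_num
  rw [hGzl, hGr, hGq, hQQ, hp1, Complex.ofReal_div]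
  have hp3 := hpow (-(z+(l:ℂ)))
  field_simp [hG1, hG2, hGz1, hsin, hC]
  linear_combination ((2:ℂ)^(2*l+1) * Complex.sin ((z - (l:ℂ)) * (Real.pi:ℂ) / 2)) * hsπ2
    - (((2:ℂ)^l)^2 * ((Real.pi:ℝ):ℂ) * Complex.sin ((z - (l:ℂ)) * (Real.pi:ℂ) / 2)) * hs22


lemma main_eq (α : ℝ) (hα : 0 < α) (l : ℕ) (M : ℝ) (hM : 0 < M) (g t : ℂ)
    (hg : g = ((Real.pi / (M * Real.sinh (Real.pi*M) * PP l M) : ℝ) : ℂ))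
    (ht : t = ((Real.sqrt 2 / Real.sqrt Real.pi : ℝ):ℂ)
      * Complex.sin ((Real.pi:ℂ)*(Complex.I*(M:ℂ) - (l:ℂ))/2) * QQ l M) :
    (g / (2*(α:ℂ))) ^ ((1:ℂ)/2) * (-Complex.I) * t
      / ((-1 : ℂ)^l * (((2*α*M) ^ (-(1/2) : ℝ) : ℝ) : ℂ)) = RR l M := by
  have hS : 0 < Real.sinh (Real.pi*M) := Real.sinh_pos_iff.2 (by positivity)
  have hP := PP_pos l M
  set r : ℝ := Real.pi / (M * Real.sinh (Real.pi*M) * PP l M) with hr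
  have hrpos : 0 < r := by rw [hr]; positivity
  have hx : (0:ℝ) ≤ r/(2*α) := by positivity
  have hdiv : g / (2*(α:ℂ)) = ((r/(2*α) : ℝ):ℂ) := by rw [hg]; push_cast; ring
  have hcp : (((r/(2*α) : ℝ)):ℂ) ^ ((1:ℂ)/2) = ((Real.sqrt (r/(2*α)) : ℝ):ℂ) := by
    rw [show ((1:ℂ)/2) = (((1/2 : ℝ)):ℂ) by norm_num, ← Complex.ofReal_cpow hx,
      ← Real.sqrt_eq_rpow]
  have hrp : ((2*α*M : ℝ) ^ (-(1/2) : ℝ) : ℝ) = (Real.sqrt (2*α*M))⁻¹ := by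
    rw [Real.rpow_neg (by positivity), Real.sqrt_eq_rpow]
  have hs : Real.sqrt (r/(2*α)) * (Real.sqrt 2 / Real.sqrt Real.pi) * Real.sqrt (2*α*M)
      = Real.sqrt (2/(Real.sinh (Real.pi*M) * PP l M)) := by
    rw [show Real.sqrt 2 / Real.sqrt Real.pi = Real.sqrt (2/Real.pi) from
      (Real.sqrt_div (by norm_num) _).symm,
      ← Real.sqrt_mul hx, ← Real.sqrt_mul (by positivity)]
    congr 1
    rw [hr]
    have h1 : Real.pi ≠ 0 := Real.pi_ne_zero
    have h2 : Real.sinh (Real.pi*M) ≠ 0 := hS.ne'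
    have h3 : PP l M ≠ 0 := hP.ne'
    have h4 : α ≠ 0 := hα.ne'
    have h5 : M ≠ 0 := hM.ne'
    field_simp
  have hd : Real.sqrt (2*α*M) ≠ 0 := by positivity
  have hden : ((-1 : ℂ)^l * (((Real.sqrt (2*α*M))⁻¹ : ℝ) : ℂ)) ≠ 0 := by
    apply mul_ne_zero
    · exact pow_ne_zero _ (by norm_num)
    · exact Complex.ofReal_ne_zero.2 (inv_ne_zero hd)
  rw [hdiv, hcp, ht, hrp, RR, ff, div_eq_iff hden]
  have hre : Real.sqrt (r/(2*α)) * (Real.sqrt 2 / Real.sqrt Real.pi)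
      = Real.sqrt (2/(Real.sinh (Real.pi*M) * PP l M)) * (Real.sqrt (2*α*M))⁻¹ := by
    rw [← div_eq_mul_inv, eq_div_iff hd]
    linear_combination hs
  have hsc : (((Real.sqrt (r/(2*α)) : ℝ):ℂ) * ((Real.sqrt 2 / Real.sqrt Real.pi : ℝ):ℂ) : ℂ)
      = ((Real.sqrt (2/(Real.sinh (Real.pi*M) * PP l M)) : ℝ):ℂ)
        * ((((Real.sqrt (2*α*M))⁻¹ : ℝ)):ℂ) := by
    rw [← Complex.ofReal_mul, ← Complex.ofReal_mul]
    exact congrArg _ hre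
  have hc : ((-1:ℂ))^l * ((-1:ℂ))^l = 1 := by
    rw [← mul_pow]; norm_num
  linear_combination ((-Complex.I) * Complex.sin ((Real.pi:ℂ)*(Complex.I*(M:ℂ) - (l:ℂ))/2)
      * QQ l M) * hsc
    + (Complex.I * Complex.sin ((Real.pi:ℂ)*(Complex.I*(M:ℂ) - (l:ℂ))/2) * QQ l M
      * ((Real.sqrt (2/(Real.sinh (Real.pi*M) * PP l M)) : ℝ):ℂ)
      * ((((Real.sqrt (2*α*M))⁻¹ : ℝ)):ℂ)) * hc

/-- In the large mass limit (ν = −1/2 + iM, M → +∞), with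
γ_l = Γ(−ν−l−1/2)Γ(ν−l+1/2), N(ν) = −i and T_ν^{l+1/2}(0) given by its closed
Gamma-function formula, one has
√(γ_l/(2α))·N(ν)·T_ν^{l+1/2}(0) ≃ (−1)^l (2αM)^{−1/2}, i.e. the ratio → 1. -/
theorem stmt16 (α : ℝ) (hα : 0 < α) (l : ℕ)
    (ν : ℝ → ℂ) (hν : ∀ M : ℝ, ν M = -1/2 + Complex.I * (M:ℂ))
    (γ : ℝ → ℂ)
    (hγ : ∀ M : ℝ, γ M = Complex.Gamma (-(ν M) - (l:ℂ) - 1/2)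
        * Complex.Gamma (ν M - (l:ℂ) + 1/2))
    (T0 : ℝ → ℂ)
    (hT0 : ∀ M : ℝ, T0 M = ((Real.sqrt Real.pi : ℝ) : ℂ) / 2 ^ ((l:ℂ) + 1/2)
        * Complex.Gamma (ν M + ((l:ℂ) + 1/2) + 1)
        / (Complex.Gamma (ν M - ((l:ℂ) + 1/2) + 1)
            * Complex.Gamma ((((l:ℂ) + 1/2) - ν M + 1)/2)
            * Complex.Gamma ((ν M + ((l:ℂ) + 1/2))/2 + 1))) :
    Filter.Tendsto
      (fun M : ℝ =>
        ((γ M / (2*(α:ℂ))) ^ ((1:ℂ)/2) * (-Complex.I) * T0 M)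
          / ((-1 : ℂ)^l * (((2*α*M) ^ (-(1/2) : ℝ) : ℝ) : ℂ)))
      Filter.atTop (nhds 1) := by
  apply Filter.Tendsto.congr' _ (RR_tendsto l)
  filter_upwards [Filter.eventually_gt_atTop 0] with M hM
  rw [hγ M, hT0 M, hν M]
  rw [show (-(-1/2 + Complex.I * (M:ℂ)) - (l:ℂ) - 1/2 : ℂ) = -(Complex.I*(M:ℂ)) - l by ring,
    show ((-1/2 + Complex.I * (M:ℂ)) - (l:ℂ) + 1/2 : ℂ) = Complex.I*(M:ℂ) - l by ring,
    gamma_eq l M hM,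
    show ((-1/2 + Complex.I * (M:ℂ)) + ((l:ℂ) + 1/2) + 1 : ℂ) = Complex.I*(M:ℂ) + l + 1 by ring,
    show ((-1/2 + Complex.I * (M:ℂ)) - ((l:ℂ) + 1/2) + 1 : ℂ) = Complex.I*(M:ℂ) - l by ring,
    show ((((l:ℂ) + 1/2) - (-1/2 + Complex.I * (M:ℂ)) + 1)/2 : ℂ)
      = ((l:ℂ) + 2 - Complex.I*(M:ℂ))/2 by ring,
    show (((-1/2 + Complex.I * (M:ℂ)) + ((l:ℂ) + 1/2))/2 + 1 : ℂ)
      = (Complex.I*(M:ℂ) + l + 2)/2 by ring,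
    T0_eq l M hM.ne']
  exact (main_eq α hα l M hM _ _ rfl rfl).symm
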